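/- Let a, b, c be complex numbers with a+1-b not a nonpositive integer, and let x > 1 be real. Then x^{-a} · ₂F₁(a, a+1-c; a+1-b; -1/x) = (1+x)^{-a} · ₂F₁(a, c-b; a+1-b; 1/(1+x)). (Pfaff-type transformation of the analytically continued solution u₃(z) = (-z)^{-a}·₂F₁(a, a+1-c; a+1-b; 1/z) at the real point z = -x.) -/

import Mathlib

open Complex Filter Set MeasureTheory

/-- The `n`-th term of the Gauss hypergeometric series `₂F₁(a,b;c;z)`. -/
noncomputable def hypTerm (a b c z : ℂ) (n : ℕ) : ℂ :=
  (ascPochhammer ℂ n).eval a * (ascPochhammer ℂ n).eval b /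
    ((ascPochhammer ℂ n).eval c * (n.factorial : ℂ)) * z ^ n

/-- The Gauss hypergeometric function `₂F₁(a,b;c;z)`. -/
noncomputable def hyp (a b c z : ℂ) : ℂ := ∑' n, hypTerm a b c z n

lemma poch_succ (s : ℂ) (k : ℕ) :
    (ascPochhammer ℂ (k+1)).eval s = (ascPochhammer ℂ k).eval s * (s + k) := by
  rw [ascPochhammer_succ_right]
  simp [Polynomial.eval_mul]

lemma poch_add (s : ℂ) (k m : ℕ) :
    (ascPochhammer ℂ (k+m)).eval s
      = (ascPochhammer ℂ k).eval s * (ascPochhammer ℂ m).eval (s + k) := by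
  rw [← ascPochhammer_mul]
  simp [Polynomial.eval_mul, Polynomial.eval_comp]

lemma poch_succ_left (s : ℂ) (k : ℕ) :
    (ascPochhammer ℂ (k+1)).eval s = s * (ascPochhammer ℂ k).eval (s + 1) := by
  rw [ascPochhammer_succ_left]
  simp [Polynomial.eval_mul, Polynomial.eval_comp]

lemma poch_ne_zero {C : ℂ} (hC : ∀ n : ℕ, C ≠ -(n : ℂ)) (k : ℕ) :
    (ascPochhammer ℂ k).eval C ≠ 0 := by
  induction k with
  | zero => simp
  | succ k ih =>
    rw [poch_succ]
    refine mul_ne_zero ih fun h => hC k (by linear_combination h)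

lemma geom_bound (g r : ℕ → ℝ) (hg : ∀ k, 0 ≤ g k) (hrec : ∀ k, g (k+1) ≤ r k * g k)
    (hr : Tendsto r atTop (nhds 1)) {ρ : ℝ} (hρ : 1 < ρ) :
    ∃ D : ℝ, 0 ≤ D ∧ ∀ k, g k ≤ D * ρ ^ k := by
  obtain ⟨K, hK⟩ := (hr.eventually (eventually_le_nhds hρ)).exists_forall_of_atTop
  set s : Finset ℝ := (Finset.range (K+1)).image (fun k => g k / ρ ^ k) with hs
  have h0mem : g 0 / ρ ^ 0 ∈ s :=
    Finset.mem_image.2 ⟨0, Finset.mem_range.2 (by omega), rfl⟩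
  have hne : s.Nonempty := ⟨_, h0mem⟩
  have hρ0 : (0:ℝ) < ρ := by linarith
  refine ⟨s.max' hne, le_trans (div_nonneg (hg 0) (by positivity)) (s.le_max' _ h0mem), ?_⟩
  have hmem : ∀ k ≤ K, g k ≤ s.max' hne * ρ ^ k := by
    intro k hk
    have : g k / ρ ^ k ≤ s.max' hne :=
      s.le_max' _ (Finset.mem_image.2 ⟨k, Finset.mem_range.2 (by omega), rfl⟩)
    calc g k = g k / ρ ^ k * ρ ^ k := by field_simp
    _ ≤ s.max' hne * ρ ^ k := by gcongr
  have hind : ∀ k, K ≤ k → g k ≤ s.max' hne * ρ ^ k := by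
    intro k
    induction k with
    | zero => intro h; exact hmem 0 (by omega)
    | succ k ih =>
      intro h
      rcases Nat.lt_or_ge K (k+1) with h' | h'
      · have hk : K ≤ k := by omega
        calc g (k+1) ≤ r k * g k := hrec k
        _ ≤ ρ * (s.max' hne * ρ ^ k) :=
            mul_le_mul (hK k hk) (ih hk) (hg k) (by linarith)
        _ = s.max' hne * ρ ^ (k+1) := by ring
      · exact hmem _ (by omega)
  intro k
  rcases le_or_gt k K with h | h
  · exact hmem k h
  · exact hind k (by omega)

open Finset in
lemma vandermonde : ∀ (n : ℕ) (b c : ℂ),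
    ∑ k ∈ range (n+1), (-1:ℂ)^k * (n.choose k) * (ascPochhammer ℂ k).eval b *
      (ascPochhammer ℂ (n-k)).eval (c + k) = (ascPochhammer ℂ n).eval (c - b) := by
  intro n
  induction n with
  | zero => intro b c; simp
  | succ n IH =>
    intro b c
    set g : ℕ → ℂ := fun k => (ascPochhammer ℂ k).eval b *
      (ascPochhammer ℂ (n+1-k)).eval (c + k) with hg
    have hf : ∀ k, (-1:ℂ)^k * ((n+1).choose k) * (ascPochhammer ℂ k).eval b *
        (ascPochhammer ℂ (n+1-k)).eval (c + k) = (-1:ℂ)^k * ((n+1).choose k) * g k := by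
      intro k; rw [hg]; ring
    calc ∑ k ∈ range (n+2), (-1:ℂ)^k * ((n+1).choose k) * (ascPochhammer ℂ k).eval b *
        (ascPochhammer ℂ (n+1-k)).eval (c + k)
        = ∑ k ∈ range (n+2), (-1:ℂ)^k * ((n+1).choose k) * g k := by
          exact Finset.sum_congr rfl fun k _ => hf k
      _ = ∑ i ∈ range (n+1), (-1:ℂ)^(i+1) * ((n+1).choose (i+1)) * g (i+1) + g 0 := by
          rw [Finset.sum_range_succ']; simp
      _ = ∑ i ∈ range (n+1), ((-((-1:ℂ)^i * (n.choose i) * g (i+1)))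
            + (-((-1:ℂ)^i * (n.choose (i+1)) * g (i+1)))) + g 0 := by
          refine congrArg (· + g 0) (Finset.sum_congr rfl fun i _ => ?_)
          rw [Nat.choose_succ_succ]
          push_cast
          ring
      _ = (∑ i ∈ range (n+1), -((-1:ℂ)^i * (n.choose i) * g (i+1)))
            + ((∑ i ∈ range (n+1), -((-1:ℂ)^i * (n.choose (i+1)) * g (i+1))) + g 0) := by
          rw [Finset.sum_add_distrib]; ring
      _ = (∑ i ∈ range (n+1), -((-1:ℂ)^i * (n.choose i) * g (i+1)))
            + ∑ k ∈ range (n+1), (-1:ℂ)^k * (n.choose k) * g k := by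
          congr 1
          have h1 : ∑ k ∈ range (n+2), (-1:ℂ)^k * (n.choose k) * g k
              = ∑ i ∈ range (n+1), (-1:ℂ)^(i+1) * (n.choose (i+1)) * g (i+1) + g 0 := by
            rw [Finset.sum_range_succ']; simp
          have h2 : ∑ k ∈ range (n+2), (-1:ℂ)^k * (n.choose k) * g k
              = ∑ k ∈ range (n+1), (-1:ℂ)^k * (n.choose k) * g k := by
            rw [Finset.sum_range_succ, Nat.choose_succ_self]; simp
          rw [← h2, h1]
          refine congrArg (· + g 0) (Finset.sum_congr rfl fun i _ => ?_)
          ring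
      _ = ∑ i ∈ range (n+1), (-1:ℂ)^i * (n.choose i) * (g i - g (i+1)) := by
          rw [← Finset.sum_add_distrib]
          refine Finset.sum_congr rfl fun i _ => ?_
          ring
      _ = (c - b) * ∑ i ∈ range (n+1), (-1:ℂ)^i * (n.choose i) *
            (ascPochhammer ℂ i).eval b * (ascPochhammer ℂ (n-i)).eval ((c+1) + i) := by
          rw [Finset.mul_sum]
          refine Finset.sum_congr rfl fun i hi => ?_
          have hin : i ≤ n := by simpa [Nat.lt_succ_iff] using hi
          have e1 : g i = (ascPochhammer ℂ i).eval b * ((c + i) *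
              (ascPochhammer ℂ (n-i)).eval ((c + i) + 1)) := by
            simp only [hg]
            rw [show n + 1 - i = (n - i) + 1 from by omega, poch_succ_left]
          have e2 : g (i+1) = (ascPochhammer ℂ i).eval b * (b + i) *
              (ascPochhammer ℂ (n-i)).eval ((c + i) + 1) := by
            simp only [hg]
            rw [show n + 1 - (i+1) = n - i from by omega, poch_succ,
              show (c : ℂ) + ((i+1 : ℕ) : ℂ) = (c + i) + 1 from by push_cast; ring]
          rw [e1, e2]
          have : ((c:ℂ)+1) + i = (c + i) + 1 := by ring
          rw [this]
          ring
      _ = (c - b) * (ascPochhammer ℂ n).eval ((c+1) - b) := by rw [IH]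
      _ = (ascPochhammer ℂ (n+1)).eval (c - b) := by
          rw [poch_succ_left]
          have : (c - b) + 1 = (c+1) - b := by ring
          rw [this]

lemma iteratedDeriv_one_sub_cpow (s : ℂ) (n : ℕ) :
    ∀ z : ℂ, z.re < 1 → iteratedDeriv n (fun u => (1 - u) ^ (-s)) z
      = (ascPochhammer ℂ n).eval s * (1 - z) ^ (-s - n) := by
  induction n with
  | zero =>
    intro z hz
    simp [iteratedDeriv_zero]
  | succ n ih =>
    intro z hz
    rw [iteratedDeriv_succ]
    have hU : IsOpen {u : ℂ | u.re < 1} := isOpen_lt continuous_re continuous_const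
    have hev : (iteratedDeriv n fun u => (1-u)^(-s))
        =ᶠ[nhds z] fun u => (ascPochhammer ℂ n).eval s * (1-u)^(-s - n) :=
      eventually_of_mem (hU.mem_nhds hz) (fun u hu => ih u hu)
    rw [hev.deriv_eq]
    have h1 : (1 - z) ∈ slitPlane := by
      rw [mem_slitPlane_iff]
      left
      rw [Complex.sub_re, Complex.one_re]
      linarith
    have hd : HasDerivAt (fun u : ℂ => (1 - u)^(-s - n))
        ((-s - n) * (1-z)^(-s - n - 1) * (-1)) z :=
      ((hasDerivAt_id z).const_sub 1).cpow_const h1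
    rw [(hd.const_mul ((ascPochhammer ℂ n).eval s)).deriv,
      show -s - (n:ℂ) - 1 = -s - ((n:ℕ)+1 : ℕ) from by push_cast; ring, poch_succ]
    push_cast
    ring

lemma binomial_hasSum (s : ℂ) {u : ℂ} (hu : ‖u‖ < 1) :
    HasSum (fun m : ℕ => (ascPochhammer ℂ m).eval s / (m.factorial : ℂ) * u ^ m)
      ((1 - u) ^ (-s)) := by
  set r : NNReal := ⟨(1+‖u‖)/2, by positivity⟩ with hr
  have hur : ‖u‖ < r := by
    simp only [hr, NNReal.coe_mk]
    show ‖u‖ < (1 + ‖u‖) / 2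
    linarith
  have hr1 : (r:ℝ) < 1 := by
    simp only [hr, NNReal.coe_mk]
    show (1 + ‖u‖) / 2 < 1
    linarith
  have hr0 : 0 < r := NNReal.coe_pos.1 (lt_of_le_of_lt (norm_nonneg u) hur)
  have hd : DifferentiableOn ℂ (fun z : ℂ => (1-z)^(-s)) (Metric.closedBall 0 r) := by
    intro z hz
    have hz1 : z.re < 1 := by
      have := Complex.re_le_norm z
      have h2 : ‖z‖ ≤ r := by simpa [Metric.mem_closedBall] using hz
      linarith
    have h1 : (1 - z) ∈ slitPlane := by
      rw [mem_slitPlane_iff]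
      left
      rw [Complex.sub_re, Complex.one_re]
      linarith
    exact ((((hasDerivAt_id z).const_sub (1:ℂ)).cpow_const h1)).differentiableAt.differentiableWithinAt
  have hball := hd.hasFPowerSeriesOnBall hr0
  have hu' : u ∈ EMetric.ball (0:ℂ) r := by
    show edist u 0 < (r : ENNReal)
    rw [edist_zero_right]
    exact_mod_cast hur
  have h := hball.hasSum_iteratedFDeriv hu'
  simp only [zero_add] at h
  convert h using 2 with m
  · rfl
  rw [iteratedFDeriv_apply_eq_iteratedDeriv_mul_prod,
    iteratedDeriv_one_sub_cpow s m 0 (by norm_num)]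
  simp only [Finset.prod_const, Finset.card_univ, Fintype.card_fin, smul_eq_mul, sub_zero,
    one_cpow]
  have : (m.factorial : ℂ) ≠ 0 := by exact_mod_cast m.factorial_ne_zero
  field_simp

lemma choose_le_two_pow_real (n k : ℕ) : (n.choose k : ℝ) ≤ 2 ^ n := by
  rcases le_or_gt k n with h | h
  · have h1 : n.choose k ≤ 2 ^ n := by
      rw [← Nat.sum_range_choose]
      exact Finset.single_le_sum (f := fun i => n.choose i) (fun i _ => Nat.zero_le _)
        (Finset.mem_range.2 (by omega))
    exact_mod_cast h1
  · rw [Nat.choose_eq_zero_of_lt h, Nat.cast_zero]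
    positivity

lemma ratio_tendsto_one (A c : ℂ) (hc : ∀ n : ℕ, c ≠ -(n : ℂ)) :
    Tendsto (fun k : ℕ => ‖A + k‖ / ‖c + k‖) atTop (nhds 1) := by
  have hne : ∀ k : ℕ, (c + (k:ℂ)) ≠ 0 := by
    intro k h
    exact hc k (by linear_combination h)
  have hq : ∀ k : ℕ, ‖A + (k:ℂ)‖ / ‖c + k‖ = ‖1 + (A - c)/(c + k)‖ := by
    intro k
    rw [← norm_div]
    congr 1
    rw [add_div' _ _ _ (hne k)]
    congr 1
    ring
  have hnorm : Tendsto (fun k : ℕ => ‖c + (k:ℂ)‖) atTop atTop := by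
    refine tendsto_atTop_mono (fun k => ?_) (tendsto_atTop_add_const_right _ (-‖c‖)
      tendsto_natCast_atTop_atTop)
    calc (k:ℝ) + -‖c‖ = ‖(k:ℂ)‖ - ‖-c‖ := by
          rw [norm_neg, Complex.norm_natCast]
          ring
    _ ≤ ‖(k:ℂ) - (-c)‖ := norm_sub_norm_le _ _
    _ = ‖c + k‖ := by rw [sub_neg_eq_add, add_comm]
  have h0 : Tendsto (fun k : ℕ => (A - c)/(c + (k:ℂ))) atTop (nhds 0) := by
    rw [tendsto_zero_iff_norm_tendsto_zero]
    simp only [norm_div]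
    exact Tendsto.div_atTop tendsto_const_nhds hnorm
  have h1 : Tendsto (fun k : ℕ => 1 + (A - c)/(c + (k:ℂ))) atTop (nhds 1) := by
    simpa using tendsto_const_nhds.add h0
  simp only [hq]
  simpa using h1.norm

lemma sqrt_one_lt {x : ℝ} (hx : 1 < x) : 1 < Real.sqrt x :=
  calc (1:ℝ) = Real.sqrt 1 := Real.sqrt_one.symm
  _ < Real.sqrt x := Real.sqrt_lt_sqrt zero_le_one hx

section
variable (a B C : ℂ) (w : ℂ)

noncomputable def Tf : ℕ × ℕ → ℂ := fun p =>
  (ascPochhammer ℂ p.1).eval a * (ascPochhammer ℂ p.1).eval (C-B) /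
    ((ascPochhammer ℂ p.1).eval C * (p.1.factorial : ℂ)) * (-1)^p.1 *
    ((ascPochhammer ℂ p.2).eval (a + p.1) / (p.2.factorial : ℂ)) * w ^ (p.1 + p.2)

lemma Tf_eq (k m : ℕ) : Tf a B C w (k, m) =
    (ascPochhammer ℂ (k+m)).eval a / (((k+m).factorial : ℕ) : ℂ) * (((k+m).choose k : ℕ) : ℂ) *
      ((ascPochhammer ℂ k).eval (C-B) / (ascPochhammer ℂ k).eval C) * ((-1)^k * w^(k+m)) := by
  have hchoose : (((k+m).choose k : ℕ) : ℂ) ≠ 0 :=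
    Nat.cast_ne_zero.2 (Nat.choose_pos (Nat.le_add_right k m)).ne'
  have hfac : (((k+m).factorial : ℕ):ℂ)
      = (((k+m).choose k : ℕ) : ℂ) * (k.factorial : ℂ) * (m.factorial : ℂ) := by
    have h := Nat.add_choose_mul_factorial_mul_factorial k m
    rw [show (k+m).choose k = (k+m).choose m from Nat.choose_symm_add]
    exact_mod_cast congrArg (Nat.cast (R := ℂ)) h.symm
  have hf1 : ((k.factorial : ℕ) : ℂ) ≠ 0 := Nat.cast_ne_zero.2 k.factorial_ne_zero
  have hf2 : ((m.factorial : ℕ) : ℂ) ≠ 0 := Nat.cast_ne_zero.2 m.factorial_ne_zero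
  simp only [Tf]
  rw [poch_add a k m, hfac]
  rcases eq_or_ne ((ascPochhammer ℂ k).eval C) 0 with h | h
  · simp [h]
  · field_simp

lemma Tf_antidiagonal (hC : ∀ n : ℕ, C ≠ -(n:ℂ)) (n : ℕ) :
    ∑ p ∈ Finset.HasAntidiagonal.antidiagonal n, Tf a B C w p = hypTerm a B C w n := by
  rw [Finset.Nat.sum_antidiagonal_eq_sum_range_succ_mk]
  have hstep : ∀ k ∈ Finset.range (n+1), Tf a B C w (k, n-k)
      = ((ascPochhammer ℂ n).eval a / ((ascPochhammer ℂ n).eval C * (n.factorial:ℂ))) *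
        ((-1:ℂ)^k * (n.choose k) * (ascPochhammer ℂ k).eval (C-B) *
          (ascPochhammer ℂ (n-k)).eval (C + k)) * w^n := by
    intro k hk
    have hkn : k ≤ n := by
      have := Finset.mem_range.1 hk
      omega
    have hks : k + (n - k) = n := by omega
    simp only [Tf]
    rw [show k + (n-k) = n from hks]
    have e1 : (ascPochhammer ℂ n).eval a
        = (ascPochhammer ℂ k).eval a * (ascPochhammer ℂ (n-k)).eval (a + k) := by
      have := poch_add a k (n-k)
      rwa [hks] at this
    have e2 : (ascPochhammer ℂ n).eval C
        = (ascPochhammer ℂ k).eval C * (ascPochhammer ℂ (n-k)).eval (C + k) := by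
      have := poch_add C k (n-k)
      rwa [hks] at this
    have e3 : ((n.factorial : ℕ):ℂ)
        = ((n.choose k : ℕ) : ℂ) * (k.factorial : ℂ) * ((n-k).factorial : ℂ) := by
      exact_mod_cast congrArg (Nat.cast (R := ℂ))
        (Nat.choose_mul_factorial_mul_factorial hkn).symm
    rw [e1, e2, e3]
    have nzn := poch_ne_zero hC n
    rw [e2] at nzn
    have nz1 : (ascPochhammer ℂ k).eval C ≠ 0 := (mul_ne_zero_iff.1 nzn).1
    have nz2 : (ascPochhammer ℂ (n-k)).eval (C + k) ≠ 0 := (mul_ne_zero_iff.1 nzn).2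
    have nzf1 : ((k.factorial : ℕ) : ℂ) ≠ 0 := Nat.cast_ne_zero.2 k.factorial_ne_zero
    have nzf2 : (((n-k).factorial : ℕ) : ℂ) ≠ 0 := Nat.cast_ne_zero.2 (n-k).factorial_ne_zero
    have nzc : ((n.choose k : ℕ):ℂ) ≠ 0 := Nat.cast_ne_zero.2 (Nat.choose_pos hkn).ne'
    field_simp
  rw [Finset.sum_congr rfl hstep, ← Finset.sum_mul, ← Finset.mul_sum,
    vandermonde n (C-B) C, show C - (C-B) = B from by ring]
  simp only [hypTerm]
  ring

lemma Tf_fiber (hC : ∀ n : ℕ, C ≠ -(n:ℂ)) (hw1 : ‖w‖ < 1) (h1w : (1:ℂ) - w ≠ 0) (k : ℕ) :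
    ∑' m, Tf a B C w (k, m)
      = (1-w)^(-a) * hypTerm a (C-B) C (w/(w-1)) k := by
  have hsplit : ∀ m : ℕ, Tf a B C w (k, m) =
      ((ascPochhammer ℂ k).eval a * (ascPochhammer ℂ k).eval (C-B) /
        ((ascPochhammer ℂ k).eval C * (k.factorial : ℂ)) * (-1)^k * w^k) *
      ((ascPochhammer ℂ m).eval (a + k) / (m.factorial : ℂ) * w^m) := by
    intro m
    simp only [Tf]
    rw [pow_add]
    ring
  rw [tsum_congr hsplit, tsum_mul_left, (binomial_hasSum (a+k) hw1).tsum_eq]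
  have hcpow : (1-w)^(-(a+(k:ℂ))) = (1-w)^(-a) * ((1-w)^k)⁻¹ := by
    rw [show -(a+(k:ℂ)) = -a + (-(k:ℂ)) from by ring, cpow_add _ _ h1w,
      show ((1:ℂ)-w) ^ (-(k:ℂ)) = (((1:ℂ)-w)^k)⁻¹ from by rw [cpow_neg, cpow_natCast]]
  rw [hcpow]
  simp only [hypTerm]
  have hwk : (w/(w-1))^k = (-1:ℂ)^k * w^k * ((1-w)^k)⁻¹ := by
    rw [show w - 1 = -(1-w) from by ring, div_neg, neg_pow, div_pow, div_eq_mul_inv]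
    ring
  rw [hwk]
  ring

end
lemma Tf_summable (a B C : ℂ) (hC : ∀ n : ℕ, C ≠ -(n:ℂ)) {w : ℂ} (hw : ‖w‖ < 1/2) :
    Summable (Tf a B C w) := by
  set W : ℝ := max ‖w‖ (1/4) with hW_def
  have hW0 : 0 < W := lt_of_lt_of_le (by norm_num) (le_max_right _ _)
  have hWhalf : W < 1/2 := max_lt hw (by norm_num)
  have hwW : ‖w‖ ≤ W := le_max_left _ _
  set ρ : ℝ := Real.sqrt (Real.sqrt (1/(2*W))) with hρ_def
  have h2W : 1 < 1/(2*W) := by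
    rw [lt_div_iff₀ (by linarith)]
    linarith
  have hρ1 : 1 < ρ := sqrt_one_lt (sqrt_one_lt h2W)
  have hρ0 : 0 < ρ := by linarith
  have hρ4 : (2*W) * (ρ^2 * ρ^2) = 1 := by
    rw [hρ_def, sq, Real.mul_self_sqrt (Real.sqrt_nonneg _), Real.mul_self_sqrt (by positivity)]
    field_simp
  set u : ℝ := 2*ρ^2*W with hu_def
  set v : ℝ := 2*ρ*W with hv_def
  have hu0 : 0 ≤ u := by positivity
  have hv0 : 0 ≤ v := by positivity
  have hu1 : u < 1 := by
    have h : u * u = 2*W := by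
      rw [hu_def]
      linear_combination (2*W) * hρ4
    nlinarith [hu0, hWhalf, hW0]
  have hv1 : v < 1 := by
    have : v ≤ u := by
      rw [hu_def, hv_def]
      nlinarith
    linarith
  have h1c : ∀ n : ℕ, (1:ℂ) ≠ -(n:ℂ) := by
    intro n h
    have h2 := congrArg Complex.re h
    simp only [Complex.one_re, Complex.neg_re, Complex.natCast_re] at h2
    have : (0:ℝ) ≤ (n:ℝ) := Nat.cast_nonneg n
    linarith
  have hrec1 : ∀ k : ℕ, ‖(ascPochhammer ℂ (k+1)).eval a‖ / ((k+1).factorial : ℝ)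
      ≤ (‖a + (k:ℂ)‖/((k:ℝ)+1)) * (‖(ascPochhammer ℂ k).eval a‖/(k.factorial : ℝ)) := by
    intro k
    rw [poch_succ, norm_mul, Nat.factorial_succ]
    apply le_of_eq
    have hfk : ((k.factorial : ℝ)) ≠ 0 := Nat.cast_ne_zero.2 k.factorial_ne_zero
    push_cast
    field_simp
  have htend1 : Tendsto (fun k : ℕ => ‖a + (k:ℂ)‖/((k:ℝ)+1)) atTop (nhds 1) := by
    have heq : (fun k : ℕ => ‖a + (k:ℂ)‖/((k:ℝ)+1))
        = (fun k : ℕ => ‖a + (k:ℂ)‖/‖(1:ℂ) + k‖) := by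
      funext k
      congr 1
      rw [show ((1:ℂ)+k) = ((k+1:ℕ):ℂ) from by push_cast; ring, Complex.norm_natCast]
      push_cast
      ring
    rw [heq]
    exact ratio_tendsto_one a 1 h1c
  obtain ⟨D1, hD10, hD1⟩ := geom_bound (fun k => ‖(ascPochhammer ℂ k).eval a‖ / k.factorial)
    (fun k => ‖a + k‖ / (k+1)) (fun k => by positivity) hrec1 htend1 hρ1
  have hrec2 : ∀ k : ℕ,
      ‖(ascPochhammer ℂ (k+1)).eval (C-B) / (ascPochhammer ℂ (k+1)).eval C‖
      ≤ (‖(C-B) + (k:ℂ)‖/‖C + (k:ℂ)‖) *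
        ‖(ascPochhammer ℂ k).eval (C-B) / (ascPochhammer ℂ k).eval C‖ := by
    intro k
    rw [poch_succ, poch_succ, norm_div, norm_div, norm_mul, norm_mul]
    apply le_of_eq
    ring
  obtain ⟨D2, hD20, hD2⟩ := geom_bound
    (fun k => ‖(ascPochhammer ℂ k).eval (C-B) / (ascPochhammer ℂ k).eval C‖)
    (fun k => ‖(C-B) + k‖ / ‖C + k‖) (fun k => by positivity) hrec2
    (ratio_tendsto_one (C-B) C hC) hρ1
  -- the bound
  have hTbound : ∀ p : ℕ×ℕ, ‖Tf a B C w p‖ ≤ (D1*D2) * (u^p.1 * v^p.2) := by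
    rintro ⟨k, m⟩
    rw [Tf_eq]
    calc ‖(ascPochhammer ℂ (k+m)).eval a / (((k+m).factorial : ℕ) : ℂ) *
          (((k+m).choose k : ℕ) : ℂ) *
          ((ascPochhammer ℂ k).eval (C-B) / (ascPochhammer ℂ k).eval C) *
          ((-1)^k * w^(k+m))‖
        = (‖(ascPochhammer ℂ (k+m)).eval a‖ / ((k+m).factorial : ℝ)) *
          (((k+m).choose k : ℕ) : ℝ) *
          ‖(ascPochhammer ℂ k).eval (C-B) / (ascPochhammer ℂ k).eval C‖ *
          ‖w‖^(k+m) := by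
          simp [norm_mul, norm_div, norm_pow]
      _ ≤ (D1 * ρ^(k+m)) * (2^(k+m)) * (D2 * ρ^k) * (W^(k+m)) := by
          gcongr ?_ * ?_ * ?_ * ?_
          · exact hD1 (k+m)
          · exact choose_le_two_pow_real (k+m) k
          · exact hD2 k
          · exact pow_le_pow_left₀ (norm_nonneg w) hwW (k+m)
      _ = (D1*D2) * (u^k * v^m) := by
          rw [hu_def, hv_def]
          ring
  have hmaj : Summable (fun q : ℕ×ℕ => (D1*D2) * (u^q.1 * v^q.2)) :=
    (((summable_geometric_of_lt_one hu0 hu1).mul_of_nonneg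
      (summable_geometric_of_lt_one hv0 hv1)
      (fun k => by positivity) (fun m => by positivity))).mul_left _
  exact Summable.of_norm_bounded hmaj hTbound

set_option maxHeartbeats 1000000 in

set_option maxHeartbeats 1000000 in
lemma pfaff (a B C : ℂ) (hC : ∀ n : ℕ, C ≠ -(n:ℂ)) {w : ℂ} (hw : ‖w‖ < 1/2) :
    hyp a B C w = (1 - w) ^ (-a) * hyp a (C - B) C (w/(w-1)) := by
  have hw1 : ‖w‖ < 1 := by linarith
  have h1w : (1:ℂ) - w ≠ 0 := by
    intro h
    have hw1' : w = 1 := by linear_combination -h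
    rw [hw1'] at hw
    norm_num at hw
  have hT_sum := Tf_summable a B C hC hw
  calc hyp a B C w = ∑' n, hypTerm a B C w n := rfl
    _ = ∑' n, ∑ p ∈ Finset.HasAntidiagonal.antidiagonal n, Tf a B C w p :=
        tsum_congr fun n => (Tf_antidiagonal a B C w hC n).symm
    _ = ∑' p : ℕ×ℕ, Tf a B C w p := by
        have h1 : ∑' (σ : Σ n : ℕ, (Finset.HasAntidiagonal.antidiagonal n : Finset (ℕ×ℕ))),
              Tf a B C w ((Finset.HasAntidiagonal.sigmaAntidiagonalEquivProd (A := ℕ)) σ) = ∑' p, Tf a B C w p :=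
          (Finset.HasAntidiagonal.sigmaAntidiagonalEquivProd (A := ℕ)).tsum_eq _
        have h2 := Summable.tsum_sigma'
          (f := fun σ : Σ n : ℕ, (Finset.HasAntidiagonal.antidiagonal n : Finset (ℕ×ℕ)) =>
            Tf a B C w ((Finset.HasAntidiagonal.sigmaAntidiagonalEquivProd (A := ℕ)) σ))
          (fun n => (hasSum_fintype _).summable) ((Equiv.summable_iff _).2 hT_sum)
        rw [← h1, h2]
        refine tsum_congr fun n => ?_
        rw [← Finset.tsum_subtype]
        exact tsum_congr fun p => rfl
    _ = ∑' k, ∑' m, Tf a B C w (k, m) := Summable.tsum_prod' hT_sum hT_sum.prod_factor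
    _ = ∑' k, ((1-w)^(-a) * hypTerm a (C-B) C (w/(w-1)) k) :=
        tsum_congr (Tf_fiber a B C w hC hw1 h1w)
    _ = (1 - w) ^ (-a) * hyp a (C - B) C (w/(w-1)) := by
        rw [tsum_mul_left]
        rfl

/-- Pfaff-type transformation of the analytically continued solution
`u₃(z) = (-z)^(-a) ₂F₁(a, a+1-c; a+1-b; 1/z)` at the real point `z = -x`, `x > 1`:
`x^(-a) ₂F₁(a, a+1-c; a+1-b; -1/x) = (1+x)^(-a) ₂F₁(a, c-b; a+1-b; 1/(1+x))`. -/
theorem pfaff_transformation_u3 (a b c : ℂ)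
    (hab : ∀ n : ℕ, a + 1 - b ≠ -(n : ℂ)) (x : ℝ) (hx : 1 < x) :
    ((x : ℝ) : ℂ) ^ (-a) * hyp a (a + 1 - c) (a + 1 - b) ((-(1 / x) : ℝ) : ℂ) =
      ((1 + x : ℝ) : ℂ) ^ (-a) * hyp a (c - b) (a + 1 - b) ((1 / (1 + x) : ℝ) : ℂ) := by
  have hx0 : (0:ℝ) < x := by linarith
  have h1x : (0:ℝ) < 1 + x := by linarith
  have hxne : (x:ℂ) ≠ 0 := ofReal_ne_zero.2 hx0.ne'
  have h1xne : (1:ℂ) + x ≠ 0 := by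
    have : ((1+x:ℝ):ℂ) ≠ 0 := ofReal_ne_zero.2 h1x.ne'
    push_cast at this
    exact this
  set w : ℂ := ((1 / (1 + x) : ℝ) : ℂ) with hw_def
  have hw : ‖w‖ < 1/2 := by
    rw [hw_def, Complex.norm_real, Real.norm_eq_abs, abs_of_pos (by positivity), div_lt_div_iff₀ h1x (by norm_num)]
    linarith
  have hP := pfaff a (c - b) (a+1-b) hab hw
  have harg : w/(w-1) = ((-(1 / x) : ℝ) : ℂ) := by
    rw [hw_def]
    push_cast
    field_simp
    rw [show (1:ℂ) - (1 + x) = -x by ring, div_neg, div_self hxne]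
  have h1mw : (1:ℂ) - w = ((x / (1+x) : ℝ) : ℂ) := by
    rw [hw_def]
    push_cast
    field_simp
    ring
  rw [hP, harg, h1mw, show (a+1-b) - (c-b) = a+1-c from by ring, ← mul_assoc,
    ← Complex.mul_cpow_ofReal_nonneg h1x.le (by positivity : (0:ℝ) ≤ x/(1+x)),
    ← ofReal_mul, show (1+x)*(x/(1+x)) = x from by field_simp]
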